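/- Let X_h ⊆ X, M_h ⊆ M be finite-dimensional with b satisfying the discrete inf-sup condition with constant β_h, and let L ∈ X' satisfy ⟨L, v⟩ = 0 for all v ∈ V_h (the discrete kernel). Then there exists a unique λ̃_h ∈ M_h with b(v, λ̃_h) = ⟨L, v⟩ for all v ∈ X_h, and ‖λ̃_h‖_M ≤ (1/β_h)·‖L|_{X_h}‖. -/

import Mathlib

/-- If `b` satisfies the discrete inf-sup condition on
`X_h × M_h` with constant `β_h` and `L ∈ X'` vanishes on the discrete kernel
`V_h`, then there is a unique `λ̃_h ∈ M_h` with `b(v,λ̃_h) = ⟨L,v⟩` for all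
`v ∈ X_h`, and `‖λ̃_h‖ ≤ (1/β_h)·sup_{v∈X_h}⟨L,v⟩/‖v‖`. -/
theorem discrete_multiplier_exists_unique
    {X M : Type*} [NormedAddCommGroup X] [InnerProductSpace ℝ X] [CompleteSpace X]
    [NormedAddCommGroup M] [NormedSpace ℝ M]
    (b : X →L[ℝ] M →L[ℝ] ℝ)
    (Xh : Submodule ℝ X) (Mh : Submodule ℝ M)
    [FiniteDimensional ℝ Xh] [FiniteDimensional ℝ Mh]
    (βh : ℝ) (hβh : 0 < βh)
    (hinfsup : ∀ q ∈ Mh, βh * ‖q‖ ≤ sSup {r : ℝ | ∃ v ∈ Xh, v ≠ 0 ∧ r = b v q / ‖v‖})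
    (L : X →L[ℝ] ℝ)
    (hLker : ∀ v ∈ Xh, (∀ μ ∈ Mh, b v μ = 0) → L v = 0) :
    ∃ l : M, (l ∈ Mh ∧ ∀ v ∈ Xh, b v l = L v) ∧
      ‖l‖ ≤ (1 / βh) * sSup {r : ℝ | ∃ v ∈ Xh, v ≠ 0 ∧ r = L v / ‖v‖} ∧
      ∀ l' : M, (l' ∈ Mh ∧ ∀ v ∈ Xh, b v l' = L v) → l' = l := by
  classical
  haveI : CompleteSpace Xh := FiniteDimensional.complete ℝ Xh
  -- uniqueness-style key: any element of Mh killed by all of b(v,·) on Xh is 0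
  have hzero : ∀ q ∈ Mh, (∀ v ∈ Xh, b v q = 0) → q = 0 := by
    intro q hq hb
    have h1 := hinfsup q hq
    have h2 : sSup {r : ℝ | ∃ v ∈ Xh, v ≠ 0 ∧ r = b v q / ‖v‖} ≤ 0 := by
      apply Real.sSup_le
      · rintro r ⟨v, hv, hv0, rfl⟩
        rw [hb v hv]
        simp
      · exact le_refl 0
    have h3 : βh * ‖q‖ ≤ 0 := le_trans h1 h2
    have h4 : ‖q‖ ≤ 0 := by
      nlinarith [norm_nonneg q]
    have := le_antisymm h4 (norm_nonneg q)
    exact norm_eq_zero.mp this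
  -- Riesz representatives
  let f : Mh →ₗ[ℝ] (Xh →L[ℝ] ℝ) :=
    { toFun := fun q => (b.flip q.val).comp Xh.subtypeL
      map_add' := by intro x y; ext v; simp
      map_smul' := by intro c x; ext v; simp }
  let B : Mh →ₗ[ℝ] Xh :=
    ((InnerProductSpace.toDual ℝ Xh).symm.toLinearEquiv.toLinearMap).comp f
  have hB : ∀ (q : Mh) (v : Xh), (inner ℝ (B q) v : ℝ) = b v.val q.val := by
    intro q v
    simp only [B, LinearMap.comp_apply, LinearEquiv.coe_coe,
      LinearIsometryEquiv.coe_toLinearEquiv]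
    rw [InnerProductSpace.toDual_symm_apply]
    rfl
  let xL : Xh := (InnerProductSpace.toDual ℝ Xh).symm (L.comp Xh.subtypeL)
  have hxL : ∀ v : Xh, (inner ℝ xL v : ℝ) = L v.val := by
    intro v
    rw [InnerProductSpace.toDual_symm_apply]
    rfl
  set R : Submodule ℝ Xh := LinearMap.range B with hR
  have hmem : xL ∈ Rᗮᗮ := by
    intro w hw
    have hw' : ∀ μ ∈ Mh, b w.val μ = 0 := by
      intro μ hμ
      have := hw (B ⟨μ, hμ⟩) (LinearMap.mem_range_self _ _)
      rw [hB] at this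
      exact this
    have : L w.val = 0 := hLker w.val w.prop hw'
    rw [real_inner_comm, hxL]
    exact this
  rw [Submodule.orthogonal_orthogonal] at hmem
  obtain ⟨l0, hl0⟩ := hmem
  refine ⟨l0.val, ⟨l0.prop, ?_⟩, ?_, ?_⟩
  · intro v hv
    have := hB l0 ⟨v, hv⟩
    rw [hl0, hxL] at this
    exact this.symm
  · -- norm bound
    have hbl : ∀ v ∈ Xh, b v l0.val = L v := by
      intro v hv
      have := hB l0 ⟨v, hv⟩
      rw [hl0, hxL] at this
      exact this.symm
    have hset : {r : ℝ | ∃ v ∈ Xh, v ≠ 0 ∧ r = b v l0.val / ‖v‖}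
        = {r : ℝ | ∃ v ∈ Xh, v ≠ 0 ∧ r = L v / ‖v‖} := by
      ext r
      constructor
      · rintro ⟨v, hv, hv0, rfl⟩
        exact ⟨v, hv, hv0, by rw [hbl v hv]⟩
      · rintro ⟨v, hv, hv0, rfl⟩
        exact ⟨v, hv, hv0, by rw [hbl v hv]⟩
    have h1 := hinfsup l0.val l0.prop
    rw [hset] at h1
    rw [one_div_mul_eq_div]
    rw [le_div_iff₀ hβh]
    linarith [mul_comm βh ‖l0.val‖]
  · rintro l' ⟨hl'M, hl'⟩
    have hbl : ∀ v ∈ Xh, b v l0.val = L v := by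
      intro v hv
      have := hB l0 ⟨v, hv⟩
      rw [hl0, hxL] at this
      exact this.symm
    have hsub : l' - l0.val ∈ Mh := Mh.sub_mem hl'M l0.prop
    have : l' - l0.val = 0 := by
      apply hzero _ hsub
      intro v hv
      rw [map_sub, hl' v hv, hbl v hv, sub_self]
    exact sub_eq_zero.mp this
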